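/- Let Γ be a non-elementary discrete purely hyperbolic subgroup of SL(2,ℝ) and let Φ and Θ be nontrivial normal subgroups of Γ. Then Φ ∩ Θ is nontrivial, and Λ(Φ ∩ Θ) = Λ(Φ) ∩ Λ(Θ). -/

import Mathlib

open scoped MatrixGroups LinearAlgebra.Projectivization UpperHalfPlane Pointwise
open Matrix

noncomputable section

/-- The topology on `SL(2, ℝ)` as a subspace of the space of `2 × 2` real matrices. -/
instance : TopologicalSpace SL(2, ℝ) :=
  inferInstanceAs (TopologicalSpace { A : Matrix (Fin 2) (Fin 2) ℝ // A.det = 1 })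

/-- The real projective line. -/
abbrev RP1 : Type := ℙ ℝ (Fin 2 → ℝ)

instance : TopologicalSpace RP1 :=
  inferInstanceAs (TopologicalSpace (Quotient (projectivizationSetoid ℝ (Fin 2 → ℝ))))

/-- The action of `SL(2, ℝ)` on the real projective line, via its linear action on `ℝ²`. -/
def sl2Act (g : SL(2, ℝ)) (p : RP1) : RP1 :=
  Projectivization.map (Matrix.SpecialLinearGroup.toLin' g).toLinearMap
    (Matrix.SpecialLinearGroup.toLin' g).injective p

/-- The point `[x : 1]` of the real projective line. -/
def projPt (x : ℝ) : RP1 :=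
  Projectivization.mk ℝ ![x, 1] (by
    intro h
    have := congrFun h 1
    simp at this)

/-- The point `∞ = [1 : 0]` of the real projective line. -/
def projInf : RP1 :=
  Projectivization.mk ℝ ![1, 0] (by
    intro h
    have := congrFun h 0
    simp at this)

/-- The ray in the upper half-plane associated to a point of `ℝP¹`:
`ray [x:1] = {x + i t : 0 < t ≤ 1}` and `ray ∞ = {i t : t ≥ 1}`. -/
def ray (p : RP1) : Set ℍ :=
  if p.rep 1 = 0 then {z : ℍ | z.re = 0 ∧ 1 ≤ z.im}
  else {z : ℍ | z.re = p.rep 0 / p.rep 1 ∧ z.im ≤ 1}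

/-- An element of `SL(2, ℝ)` is hyperbolic if the absolute value of its trace exceeds `2`. -/
def IsHyperbolic (g : SL(2, ℝ)) : Prop :=
  2 < |Matrix.trace (g : Matrix (Fin 2) (Fin 2) ℝ)|

/-- A subgroup of `SL(2, ℝ)` is purely hyperbolic if all of its non-identity elements
are hyperbolic. -/
def PurelyHyperbolic (Γ : Subgroup SL(2, ℝ)) : Prop :=
  ∀ g ∈ Γ, g ≠ 1 → IsHyperbolic g

/-- A subgroup of `SL(2, ℝ)` is non-elementary if it is not virtually abelian, i.e. it has
no abelian subgroup of finite index. -/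
def IsNonElementary (Γ : Subgroup SL(2, ℝ)) : Prop :=
  ¬ ∃ H : Subgroup Γ, H.FiniteIndex ∧ ∀ a ∈ H, ∀ b ∈ H, a * b = b * a

/-- `p ∈ ℝP¹` is a conical limit point of `Γ'` if some compact subset of `ℍ` has infinitely
many `Γ'`-translates meeting the ray ending at `p`. -/
def IsConicalLimitPoint (Γ' : Subgroup SL(2, ℝ)) (p : RP1) : Prop :=
  ∃ K : Set ℍ, IsCompact K ∧ ∃ γ : ℕ → SL(2, ℝ), Function.Injective γ ∧
    (∀ k, γ k ∈ Γ') ∧ ∀ k, (γ k • K ∩ ray p).Nonempty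

/-- `p ∈ ℝP¹` is a uniform conical limit point of `Γ'` if the ray ending at `p` is covered by
the translates of a single compact subset of `ℍ` by an injective sequence in `Γ'`. -/
def IsUniformConicalLimitPoint (Γ' : Subgroup SL(2, ℝ)) (p : RP1) : Prop :=
  ∃ K : Set ℍ, IsCompact K ∧ ∃ γ : ℕ → SL(2, ℝ), Function.Injective γ ∧
    (∀ k, γ k ∈ Γ') ∧ ray p ⊆ ⋃ k, γ k • K

/-- The limit set of a subgroup of `SL(2, ℝ)`: the closure in `ℝP¹` of the set of fixed
points of hyperbolic elements of the subgroup. -/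
def limitSet (Γ' : Subgroup SL(2, ℝ)) : Set RP1 :=
  closure {p : RP1 | ∃ g ∈ Γ', IsHyperbolic g ∧ sl2Act g p = p}


open Filter

section LinAlg
variable {v₁ v₂ : Fin 2 → ℝ}

lemma decomp (hd : v₁ 0 * v₂ 1 - v₁ 1 * v₂ 0 ≠ 0) (w : Fin 2 → ℝ) :
    ∃ a b : ℝ, w = a • v₁ + b • v₂ := by
  set D := v₁ 0 * v₂ 1 - v₁ 1 * v₂ 0 with hD
  refine ⟨(w 0 * v₂ 1 - w 1 * v₂ 0)/D, (v₁ 0 * w 1 - v₁ 1 * w 0)/D, ?_⟩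
  have key : (w 0 * v₂ 1 - w 1 * v₂ 0) • v₁ + (v₁ 0 * w 1 - v₁ 1 * w 0) • v₂ = D • w := by
    funext i; fin_cases i <;> (simp [Pi.add_apply, Pi.smul_apply, hD]; ring)
  calc w = D⁻¹ • (D • w) := by rw [smul_smul, inv_mul_cancel₀ hd, one_smul]
    _ = D⁻¹ • ((w 0 * v₂ 1 - w 1 * v₂ 0) • v₁ + (v₁ 0 * w 1 - v₁ 1 * w 0) • v₂) := by rw [key]
    _ = _ := by
        rw [smul_add, smul_smul, smul_smul, div_eq_inv_mul, div_eq_inv_mul]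

lemma coeff_unique (hd : v₁ 0 * v₂ 1 - v₁ 1 * v₂ 0 ≠ 0) {a b : ℝ}
    (h : a • v₁ + b • v₂ = 0) : a = 0 ∧ b = 0 := by
  have h0 := congrFun h 0
  have h1 := congrFun h 1
  simp [Pi.add_apply, Pi.smul_apply] at h0 h1
  constructor
  · have : a * (v₁ 0 * v₂ 1 - v₁ 1 * v₂ 0) = 0 := by
      linear_combination v₂ 1 * h0 - v₂ 0 * h1
    rcases mul_eq_zero.1 this with h | h
    · exact h
    · exact absurd h hd
  · have : b * (v₁ 0 * v₂ 1 - v₁ 1 * v₂ 0) = 0 := by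
      linear_combination v₁ 0 * h1 - v₁ 1 * h0
    rcases mul_eq_zero.1 this with h | h
    · exact h
    · exact absurd h hd

lemma v1_ne_zero (hd : v₁ 0 * v₂ 1 - v₁ 1 * v₂ 0 ≠ 0) : v₁ ≠ 0 := by
  intro h; apply hd; rw [h]; simp

lemma v2_ne_zero (hd : v₁ 0 * v₂ 1 - v₁ 1 * v₂ 0 ≠ 0) : v₂ ≠ 0 := by
  intro h; apply hd; rw [h]; simp

lemma combo_ne_zero (hd : v₁ 0 * v₂ 1 - v₁ 1 * v₂ 0 ≠ 0) {a b : ℝ} (hab : a ≠ 0 ∨ b ≠ 0) :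
    a • v₁ + b • v₂ ≠ 0 := by
  intro h
  rcases coeff_unique hd h with ⟨h1, h2⟩
  rcases hab with h | h
  · exact h h1
  · exact h h2

lemma mk_v1_ne_mk_v2 (hd : v₁ 0 * v₂ 1 - v₁ 1 * v₂ 0 ≠ 0) :
    Projectivization.mk ℝ v₁ (v1_ne_zero hd) ≠ Projectivization.mk ℝ v₂ (v2_ne_zero hd) := by
  intro h
  obtain ⟨u, hu⟩ := (Projectivization.mk_eq_mk_iff ℝ _ _ _ _).1 h
  have : (1:ℝ) • v₁ + (-(u:ℝ)) • v₂ = 0 := by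
    rw [← hu]; funext i; simp [Pi.smul_apply, Units.smul_def]
  exact one_ne_zero (coeff_unique hd this).1

lemma eig_unique (hd : v₁ 0 * v₂ 1 - v₁ 1 * v₂ 0 ≠ 0) {A : Matrix (Fin 2) (Fin 2) ℝ} {l₁ l₂ : ℝ}
    (h1 : A *ᵥ v₁ = l₁ • v₁) (h2 : A *ᵥ v₂ = l₂ • v₂) (hne : l₁ ≠ l₂)
    {u : Fin 2 → ℝ} (hu : u ≠ 0) {c : ℝ} (hc : A *ᵥ u = c • u) :
    (∃ a : ℝ, a ≠ 0 ∧ u = a • v₁) ∨ (∃ b : ℝ, b ≠ 0 ∧ u = b • v₂) := by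
  obtain ⟨a, b, rfl⟩ := decomp hd u
  rw [Matrix.mulVec_add, Matrix.mulVec_smul, Matrix.mulVec_smul, h1, h2] at hc
  have key : (a * l₁ - c * a) • v₁ + (b * l₂ - c * b) • v₂ = 0 := by
    have h' := sub_eq_zero.2 hc
    rw [← h']; funext i; simp [Pi.add_apply, Pi.smul_apply]; ring
  obtain ⟨e1, e2⟩ := coeff_unique hd key
  by_cases hA : a = 0
  · right
    subst hA
    refine ⟨b, ?_, by simp⟩
    intro hb; subst hb; simp at hu
  · by_cases hB : b = 0
    · left
      subst hB
      exact ⟨a, hA, by simp⟩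
    · exfalso
      have hc1 : c = l₁ := by
        have h' : a * (l₁ - c) = 0 := by linear_combination e1
        rcases mul_eq_zero.1 h' with h | h
        · exact absurd h hA
        · linarith
      have hc2 : c = l₂ := by
        have h' : b * (l₂ - c) = 0 := by linear_combination e2
        rcases mul_eq_zero.1 h' with h | h
        · exact absurd h hB
        · linarith
      exact hne (hc1 ▸ hc2 ▸ rfl)

end LinAlg

lemma pow_mulVec {A : Matrix (Fin 2) (Fin 2) ℝ} {l : ℝ} {v : Fin 2 → ℝ}
    (h : A *ᵥ v = l • v) (k : ℕ) : (A ^ k) *ᵥ v = (l ^ k) • v := by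
  induction k with
  | zero => simp [Matrix.one_mulVec]
  | succ n ih =>
      rw [pow_succ, ← Matrix.mulVec_mulVec, h, Matrix.mulVec_smul, ih, smul_smul, pow_succ]
      ring_nf

lemma mk_smul_eq {v : Fin 2 → ℝ} (hv : v ≠ 0) {c : ℝ} (hc : c ≠ 0) :
    Projectivization.mk ℝ (c • v) (smul_ne_zero hc hv) = Projectivization.mk ℝ v hv := by
  rw [Projectivization.mk_eq_mk_iff]
  exact ⟨Units.mk0 c hc, rfl⟩

lemma tendsto_mk {u : ℕ → Fin 2 → ℝ} {w : Fin 2 → ℝ} (hu : ∀ k, u k ≠ 0) (hw : w ≠ 0)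
    (h : Tendsto u atTop (nhds w)) :
    Tendsto (fun k => Projectivization.mk ℝ (u k) (hu k)) atTop
      (nhds (Projectivization.mk ℝ w hw)) := by
  have hcont : Continuous (fun v : {v : Fin 2 → ℝ // v ≠ 0} => Projectivization.mk ℝ v.1 v.2) :=
    continuous_quotient_mk'
  have hsub : Tendsto (fun k => (⟨u k, hu k⟩ : {v : Fin 2 → ℝ // v ≠ 0})) atTop
      (nhds ⟨w, hw⟩) := by
    rw [tendsto_subtype_rng]
    exact h
  exact (hcont.continuousAt.tendsto.comp hsub)


lemma eigen_aux (a b c d : ℝ) (hdet : a * d - b * c = 1) (htr : 2 < |a + d|) :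
    ∃ (l : ℝ) (v₁ v₂ : Fin 2 → ℝ), 1 < |l| ∧
      !![a,b;c,d] *ᵥ v₁ = l • v₁ ∧ !![a,b;c,d] *ᵥ v₂ = l⁻¹ • v₂ ∧
      v₁ 0 * v₂ 1 - v₁ 1 * v₂ 0 ≠ 0 := by
  set t := a + d with ht
  have hdisc : 0 < t^2 - 4 := by nlinarith [abs_nonneg t, sq_abs t]
  set s := Real.sqrt (t^2 - 4) with hs
  have hs2 : s^2 = t^2 - 4 := Real.sq_sqrt hdisc.le
  have hspos : 0 < s := Real.sqrt_pos.2 hdisc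
  by_cases hbz : b = 0
  · have had : a * d = 1 := by linear_combination hdet + c * hbz
    have hane : a ≠ d := by
      intro h
      have : d = 1 ∨ d = -1 := by
        have h2 : (d-1)*(d+1) = 0 := by linear_combination had - d * h
        rcases mul_eq_zero.1 h2 with h1 | h1
        · left; linarith
        · right; linarith
      rcases this with h1 | h1 <;> rw [ht, h, h1] at htr <;> norm_num at htr
    have hda : d ≠ 0 := by intro h; rw [h] at had; simp at had
    have haa : a ≠ 0 := by intro h; rw [h] at had; simp at had
    have hvec1 : !![a,b;c,d] *ᵥ ![a - d, c] = a • ![a - d, c] := by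
      funext i; fin_cases i <;>
        simp [Matrix.mulVec, dotProduct, Fin.sum_univ_two, hbz] <;> ring
    have hvec2 : !![a,b;c,d] *ᵥ ![(0:ℝ), 1] = d • ![(0:ℝ), 1] := by
      funext i; fin_cases i <;>
        simp [Matrix.mulVec, dotProduct, Fin.sum_univ_two, hbz]
    have hid : a⁻¹ = d := by field_simp; linarith
    have hia : d⁻¹ = a := by field_simp; linarith [mul_comm a d]
    rcases lt_or_ge 1 (|a|) with hgt | hle
    · exact ⟨a, ![a-d,c], ![(0:ℝ),1], hgt, hvec1, by rw [hid]; exact hvec2,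
        by simp; intro h; exact hane (by linarith)⟩
    · refine ⟨d, ![(0:ℝ),1], ![a-d,c], ?_, hvec2, by rw [hia]; exact hvec1,
        by simp; intro h; exact hane (by linarith)⟩
      have h1 : |a| * |d| = 1 := by rw [← abs_mul, had]; simp
      have h2 : (0:ℝ) < |a| := abs_pos.2 haa
      nlinarith [abs_nonneg a, abs_nonneg d, abs_add_le a d, le_abs_self (a+d), neg_abs_le (a+d)]
  · have key : ∀ l : ℝ, l^2 - t*l + 1 = 0 → !![a,b;c,d] *ᵥ ![b, l - a] = l • ![b, l - a] := by
      intro l hl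
      funext i; fin_cases i
      · simp [Matrix.mulVec, dotProduct, Fin.sum_univ_two]; ring
      · simp [Matrix.mulVec, dotProduct, Fin.sum_univ_two]
        have hl' : l^2 - (a+d)*l + 1 = 0 := by rw [ht] at hl; exact hl
        linear_combination -hl' - hdet
    have hroot1 : ((t+s)/2)^2 - t*((t+s)/2) + 1 = 0 := by linear_combination hs2/4
    have hroot2 : ((t-s)/2)^2 - t*((t-s)/2) + 1 = 0 := by linear_combination hs2/4
    have hprod : ((t+s)/2) * ((t-s)/2) = 1 := by linear_combination -hs2/4
    rcases lt_abs.1 htr with htpos | htneg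
    · have hl1 : 1 < |(t+s)/2| := by rw [abs_of_pos (by nlinarith)]; nlinarith
      refine ⟨(t+s)/2, ![b, (t+s)/2 - a], ![b, (t-s)/2 - a], hl1,
        key _ hroot1, by rw [show ((t+s)/2)⁻¹ = (t-s)/2 from (eq_inv_of_mul_eq_one_right hprod).symm]; exact key _ hroot2, ?_⟩
      simp only [Matrix.cons_val_zero, Matrix.cons_val_one, Matrix.head_cons]
      intro h; apply hbz
      have : b * ((t-s)/2 - (t+s)/2) = 0 := by linear_combination h
      rcases mul_eq_zero.1 this with h' | h'
      · exact h'
      · exfalso; nlinarith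
    · have hl1 : 1 < |(t-s)/2| := by rw [abs_of_neg (by nlinarith)]; nlinarith
      refine ⟨(t-s)/2, ![b, (t-s)/2 - a], ![b, (t+s)/2 - a], hl1,
        key _ hroot2, by rw [show ((t-s)/2)⁻¹ = (t+s)/2 from (eq_inv_of_mul_eq_one_left hprod).symm]; exact key _ hroot1, ?_⟩
      simp only [Matrix.cons_val_zero, Matrix.cons_val_one, Matrix.head_cons]
      intro h; apply hbz
      have : b * ((t+s)/2 - (t-s)/2) = 0 := by linear_combination h
      rcases mul_eq_zero.1 this with h' | h'
      · exact h'
      · exfalso; nlinarith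

lemma mulVec_ne_zero (g : SL(2,ℝ)) {v : Fin 2 → ℝ} (hv : v ≠ 0) :
    (g : Matrix (Fin 2) (Fin 2) ℝ) *ᵥ v ≠ 0 := by
  intro h
  apply hv
  have := (Matrix.SpecialLinearGroup.toLin' g).injective (a₁ := v) (a₂ := 0) ?_
  · exact this
  · simp [Matrix.SpecialLinearGroup.toLin'_apply, h]

lemma sl2Act_mk (g : SL(2,ℝ)) (v : Fin 2 → ℝ) (hv : v ≠ 0) :
    sl2Act g (Projectivization.mk ℝ v hv) =
      Projectivization.mk ℝ ((g : Matrix (Fin 2) (Fin 2) ℝ) *ᵥ v) (mulVec_ne_zero g hv) := by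
  simp [sl2Act, Projectivization.map_mk, Matrix.SpecialLinearGroup.toLin'_apply]

lemma sl2Act_mul (g h : SL(2,ℝ)) (p : RP1) :
    sl2Act (g * h) p = sl2Act g (sl2Act h p) := by
  induction p using Projectivization.ind with
  | h v hv =>
    rw [sl2Act_mk, sl2Act_mk, sl2Act_mk]
    congr 1
    rw [Matrix.SpecialLinearGroup.coe_mul, ← Matrix.mulVec_mulVec]

-- fixed points of an element with two distinct eigenvalues
lemma fix_pts {g : SL(2,ℝ)} {l m : ℝ} {v₁ v₂ : Fin 2 → ℝ}
    (hd : v₁ 0 * v₂ 1 - v₁ 1 * v₂ 0 ≠ 0)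
    (h1 : (g : Matrix (Fin 2) (Fin 2) ℝ) *ᵥ v₁ = l • v₁)
    (h2 : (g : Matrix (Fin 2) (Fin 2) ℝ) *ᵥ v₂ = m • v₂) (hlm : l ≠ m)
    {p : RP1} (hp : sl2Act g p = p) :
    p = Projectivization.mk ℝ v₁ (v1_ne_zero hd) ∨
      p = Projectivization.mk ℝ v₂ (v2_ne_zero hd) := by
  induction p using Projectivization.ind with
  | h u hu =>
    rw [sl2Act_mk] at hp
    obtain ⟨c, hc⟩ := (Projectivization.mk_eq_mk_iff ℝ _ _ _ _).1 hp
    have hc' : (g : Matrix (Fin 2) (Fin 2) ℝ) *ᵥ u = (c : ℝ) • u := by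
      rw [← hc]; funext i; simp [Pi.smul_apply, Units.smul_def]
    rcases eig_unique hd h1 h2 hlm hu hc' with ⟨a, ha, hau⟩ | ⟨b, hb, hbu⟩
    · left; subst hau; exact mk_smul_eq _ ha
    · right; subst hbu; exact mk_smul_eq _ hb

-- main dynamics lemma
lemma tendsto_attract (g : SL(2,ℝ)) {l m : ℝ} {v₁ v₂ : Fin 2 → ℝ}
    (hd : v₁ 0 * v₂ 1 - v₁ 1 * v₂ 0 ≠ 0) (hlm : |m| < |l|)
    (h1 : (g : Matrix (Fin 2) (Fin 2) ℝ) *ᵥ v₁ = l • v₁)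
    (h2 : (g : Matrix (Fin 2) (Fin 2) ℝ) *ᵥ v₂ = m • v₂)
    {w : Fin 2 → ℝ} (hw : w ≠ 0)
    (hwne : Projectivization.mk ℝ w hw ≠ Projectivization.mk ℝ v₂ (v2_ne_zero hd)) :
    Filter.Tendsto (fun k => sl2Act (g ^ k) (Projectivization.mk ℝ w hw)) atTop
      (nhds (Projectivization.mk ℝ v₁ (v1_ne_zero hd))) := by
  have hl0 : l ≠ 0 := by
    intro h; rw [h] at hlm; simp at hlm; exact (abs_nonneg m).not_gt hlm
  have hmk_congr : ∀ (v w : Fin 2 → ℝ) (h : v = w) (hv : v ≠ 0),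
      Projectivization.mk ℝ v hv = Projectivization.mk ℝ w (h ▸ hv) := by
    intro v w h hv; subst h; rfl
  obtain ⟨a, b, hab⟩ := decomp hd w
  have ha : a ≠ 0 := by
    intro h0
    apply hwne
    subst h0
    have hb : b ≠ 0 := by
      intro h0; subst h0; apply hw; rw [hab]; simp
    have : w = b • v₂ := by rw [hab]; simp
    subst this
    exact mk_smul_eq _ hb
  set r := m / l with hr
  have hrabs : |r| < 1 := by
    rw [hr, abs_div]
    rw [div_lt_one (by positivity)]
    exact hlm
  set u : ℕ → Fin 2 → ℝ := fun k => (1:ℝ) • v₁ + (r ^ k * (b / a)) • v₂ with hu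
  have hune : ∀ k, u k ≠ 0 := fun k => combo_ne_zero hd (Or.inl one_ne_zero)
  have hkey : ∀ k, sl2Act (g ^ k) (Projectivization.mk ℝ w hw) =
      Projectivization.mk ℝ (u k) (hune k) := by
    intro k
    rw [sl2Act_mk]
    have hpow : ((g ^ k : SL(2,ℝ)) : Matrix (Fin 2) (Fin 2) ℝ) *ᵥ w =
        (a * l ^ k) • u k := by
      rw [Matrix.SpecialLinearGroup.coe_pow, hab, Matrix.mulVec_add, Matrix.mulVec_smul,
        Matrix.mulVec_smul, pow_mulVec h1, pow_mulVec h2, hu]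
      funext i
      simp only [Pi.add_apply, Pi.smul_apply, smul_eq_mul, div_pow, inv_pow]
      field_simp
      have hlk : l ^ k * l⁻¹ ^ k = 1 := by
        rw [inv_pow, mul_inv_cancel₀ (pow_ne_zero k hl0)]
      linear_combination (-(b * m ^ k * v₂ i)) * hlk
    calc Projectivization.mk ℝ (((g ^ k : SL(2,ℝ)) : Matrix (Fin 2) (Fin 2) ℝ) *ᵥ w) (mulVec_ne_zero _ hw)
        = Projectivization.mk ℝ ((a * l ^ k) • u k) (hpow ▸ mulVec_ne_zero _ hw) :=
          hmk_congr _ _ hpow _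
      _ = Projectivization.mk ℝ (u k) (hune k) := mk_smul_eq (hune k) (by positivity)
  have hulim : Filter.Tendsto u atTop (nhds v₁) := by
    have h0 : Filter.Tendsto (fun k => r ^ k * (b / a)) atTop (nhds 0) := by
      simpa using (tendsto_pow_atTop_nhds_zero_iff.2 hrabs).mul_const (b / a)
    have h1' : Filter.Tendsto (fun k => (r ^ k * (b / a)) • v₂) atTop (nhds ((0:ℝ) • v₂)) :=
      h0.smul_const v₂
    have h2' := (tendsto_const_nhds (x := (1:ℝ) • v₁) (f := atTop (α := ℕ))).add h1'
    simp only [hu, one_smul]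
    simpa using h2'
  have hfin := tendsto_mk hune (v1_ne_zero hd) hulim
  have heq : (fun k => sl2Act (g ^ k) (Projectivization.mk ℝ w hw)) =
      fun k => Projectivization.mk ℝ (u k) (hune k) := funext hkey
  rw [heq]
  exact hfin

lemma mk_congr {v w : Fin 2 → ℝ} (h : v = w) (hv : v ≠ 0) :
    Projectivization.mk ℝ v hv = Projectivization.mk ℝ w (h ▸ hv) := by subst h; rfl

lemma exists_eigenSL {g : SL(2,ℝ)} (hg : IsHyperbolic g) :
    ∃ (l : ℝ) (v₁ v₂ : Fin 2 → ℝ), 1 < |l| ∧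
      (g : Matrix (Fin 2) (Fin 2) ℝ) *ᵥ v₁ = l • v₁ ∧
      (g : Matrix (Fin 2) (Fin 2) ℝ) *ᵥ v₂ = l⁻¹ • v₂ ∧
      v₁ 0 * v₂ 1 - v₁ 1 * v₂ 0 ≠ 0 := by
  have hdet : (g : Matrix (Fin 2) (Fin 2) ℝ) 0 0 * (g : Matrix (Fin 2) (Fin 2) ℝ) 1 1 -
      (g : Matrix (Fin 2) (Fin 2) ℝ) 0 1 * (g : Matrix (Fin 2) (Fin 2) ℝ) 1 0 = 1 := by
    have := g.2
    rwa [Matrix.det_fin_two] at this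
  have htr : 2 < |(g : Matrix (Fin 2) (Fin 2) ℝ) 0 0 + (g : Matrix (Fin 2) (Fin 2) ℝ) 1 1| := by
    have := hg
    rwa [_root_.IsHyperbolic, Matrix.trace_fin_two] at this
  have h := eigen_aux _ _ _ _ hdet htr
  rwa [← Matrix.eta_fin_two (g : Matrix (Fin 2) (Fin 2) ℝ)] at h

lemma inv_eig (g : SL(2,ℝ)) {v : Fin 2 → ℝ} {l : ℝ}
    (h : (g : Matrix (Fin 2) (Fin 2) ℝ) *ᵥ v = l • v) (hl : l ≠ 0) :
    ((g⁻¹ : SL(2,ℝ)) : Matrix (Fin 2) (Fin 2) ℝ) *ᵥ v = l⁻¹ • v := by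
  have hmul : ((g⁻¹ : SL(2,ℝ)) : Matrix (Fin 2) (Fin 2) ℝ) * (g : Matrix (Fin 2) (Fin 2) ℝ) = 1 := by
    rw [← Matrix.SpecialLinearGroup.coe_mul, inv_mul_cancel, Matrix.SpecialLinearGroup.coe_one]
  have key : ((g⁻¹ : SL(2,ℝ)) : Matrix (Fin 2) (Fin 2) ℝ) *ᵥ ((g : Matrix (Fin 2) (Fin 2) ℝ) *ᵥ v) = v := by
    rw [Matrix.mulVec_mulVec, hmul, Matrix.one_mulVec]
  rw [h, Matrix.mulVec_smul] at key
  calc ((g⁻¹ : SL(2,ℝ)) : Matrix (Fin 2) (Fin 2) ℝ) *ᵥ v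
      = (l⁻¹ * l) • (((g⁻¹ : SL(2,ℝ)) : Matrix (Fin 2) (Fin 2) ℝ) *ᵥ v) := by
        rw [inv_mul_cancel₀ hl, one_smul]
    _ = l⁻¹ • (l • (((g⁻¹ : SL(2,ℝ)) : Matrix (Fin 2) (Fin 2) ℝ) *ᵥ v)) := by rw [smul_smul]
    _ = l⁻¹ • v := by rw [key]

lemma fixed_of_eigen {g : SL(2,ℝ)} {v : Fin 2 → ℝ} {l : ℝ} (hv : v ≠ 0)
    (h : (g : Matrix (Fin 2) (Fin 2) ℝ) *ᵥ v = l • v) (hl : l ≠ 0) :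
    sl2Act g (Projectivization.mk ℝ v hv) = Projectivization.mk ℝ v hv := by
  rw [sl2Act_mk]
  calc Projectivization.mk ℝ ((g : Matrix (Fin 2) (Fin 2) ℝ) *ᵥ v) (mulVec_ne_zero g hv)
      = Projectivization.mk ℝ (l • v) (h ▸ mulVec_ne_zero g hv) := mk_congr h _
    _ = Projectivization.mk ℝ v hv := mk_smul_eq hv hl

lemma attracting_mem_limitSet {Γ N : Subgroup SL(2,ℝ)} (hPH : PurelyHyperbolic Γ)
    (hNΓ : N ≤ Γ) (hconj : ∀ g ∈ Γ, ∀ n ∈ N, g * n * g⁻¹ ∈ N)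
    {n : SL(2,ℝ)} (hnN : n ∈ N) (hn1 : n ≠ 1)
    {γ : SL(2,ℝ)} (hγ : γ ∈ Γ) {l m : ℝ} {v₁ v₂ : Fin 2 → ℝ}
    (hd : v₁ 0 * v₂ 1 - v₁ 1 * v₂ 0 ≠ 0) (hlm : |m| < |l|)
    (h1 : (γ : Matrix (Fin 2) (Fin 2) ℝ) *ᵥ v₁ = l • v₁)
    (h2 : (γ : Matrix (Fin 2) (Fin 2) ℝ) *ᵥ v₂ = m • v₂) :
    Projectivization.mk ℝ v₁ (v1_ne_zero hd) ∈ limitSet N := by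
  have hnhyp : IsHyperbolic n := hPH n (hNΓ hnN) hn1
  obtain ⟨mn, w₁, w₂, hmn, hw1, hw2, hdn⟩ := exists_eigenSL hnhyp
  have hmn0 : mn ≠ 0 := by intro h; rw [h] at hmn; simp at hmn; linarith
  have hmninv0 : mn⁻¹ ≠ 0 := inv_ne_zero hmn0
  -- pick a fixed point of n distinct from mk v₂
  have hpick : ∃ (w : Fin 2 → ℝ) (hw : w ≠ 0),
      Projectivization.mk ℝ w hw ≠ Projectivization.mk ℝ v₂ (v2_ne_zero hd) ∧
      sl2Act n (Projectivization.mk ℝ w hw) = Projectivization.mk ℝ w hw := by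
    by_cases hcase : Projectivization.mk ℝ w₁ (v1_ne_zero hdn) =
        Projectivization.mk ℝ v₂ (v2_ne_zero hd)
    · refine ⟨w₂, v2_ne_zero hdn, ?_, fixed_of_eigen _ hw2 hmninv0⟩
      rw [← hcase]
      exact (mk_v1_ne_mk_v2 hdn).symm
    · exact ⟨w₁, v1_ne_zero hdn, hcase, fixed_of_eigen _ hw1 hmn0⟩
  obtain ⟨w, hw, hwne, hwfix⟩ := hpick
  apply mem_closure_of_tendsto (tendsto_attract γ hd hlm h1 h2 hw hwne)
  apply Filter.Eventually.of_forall
  intro k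
  refine ⟨γ ^ k * n * (γ ^ k)⁻¹, hconj _ (pow_mem hγ k) n hnN, ?_, ?_⟩
  · apply hPH _ (hNΓ (hconj _ (pow_mem hγ k) n hnN))
    intro hone
    apply hn1
    have := congrArg (fun x => (γ ^ k)⁻¹ * x * γ ^ k) hone
    simpa [mul_assoc] using this
  · rw [← sl2Act_mul]
    have hre : γ ^ k * n * (γ ^ k)⁻¹ * γ ^ k = γ ^ k * n := by group
    rw [hre, sl2Act_mul, hwfix]

lemma limitSet_eq_of_normal {Γ N : Subgroup SL(2,ℝ)} (hPH : PurelyHyperbolic Γ)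
    (hNΓ : N ≤ Γ) (hconj : ∀ g ∈ Γ, ∀ n ∈ N, g * n * g⁻¹ ∈ N) (hNnt : N ≠ ⊥) :
    limitSet N = limitSet Γ := by
  apply le_antisymm
  · exact closure_mono (fun p ⟨g, hg, h⟩ => ⟨g, hNΓ hg, h⟩)
  · apply closure_minimal ?_ isClosed_closure
    rintro p ⟨g, hgΓ, hghyp, hgfix⟩
    obtain ⟨l, v₁, v₂, hl, h1, h2, hd⟩ := exists_eigenSL hghyp
    have hl0 : l ≠ 0 := by intro h; rw [h] at hl; simp at hl; linarith
    have hlinv : |l⁻¹| < |l| := by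
      rw [abs_inv]
      calc |l|⁻¹ < 1 := by rw [inv_lt_one_iff₀]; right; exact hl
        _ < |l| := hl
    have hlne : l ≠ l⁻¹ := by
      intro h
      have : l * l = 1 := by
        nth_rewrite 2 [h]
        exact mul_inv_cancel₀ hl0
      have habs : |l| * |l| = 1 := by rw [← abs_mul, this]; simp
      nlinarith
    obtain ⟨nn, hnne⟩ := Subgroup.ne_bot_iff_exists_ne_one.1 hNnt
    have hnN : (nn : SL(2,ℝ)) ∈ N := nn.2
    have hn1 : (nn : SL(2,ℝ)) ≠ 1 := by
      intro h; apply hnne; exact Subtype.ext h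
    rcases fix_pts hd h1 h2 hlne hgfix with hp | hp
    · rw [hp]
      exact attracting_mem_limitSet hPH hNΓ hconj hnN hn1 hgΓ hd hlinv h1 h2
    · rw [hp]
      have hd' : v₂ 0 * v₁ 1 - v₂ 1 * v₁ 0 ≠ 0 := by intro h; apply hd; linarith
      have h1' : ((g⁻¹ : SL(2,ℝ)) : Matrix (Fin 2) (Fin 2) ℝ) *ᵥ v₂ = l • v₂ := by
        have := inv_eig g h2 (inv_ne_zero hl0)
        rwa [inv_inv] at this
      have h2' : ((g⁻¹ : SL(2,ℝ)) : Matrix (Fin 2) (Fin 2) ℝ) *ᵥ v₁ = l⁻¹ • v₁ :=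
        inv_eig g h1 hl0
      exact attracting_mem_limitSet hPH hNΓ hconj hnN hn1 (inv_mem hgΓ) hd' hlinv h1' h2'

lemma matrix_ext_basis {v₁ v₂ : Fin 2 → ℝ} (hd : v₁ 0 * v₂ 1 - v₁ 1 * v₂ 0 ≠ 0)
    {A B : Matrix (Fin 2) (Fin 2) ℝ} (hA1 : A *ᵥ v₁ = B *ᵥ v₁) (hA2 : A *ᵥ v₂ = B *ᵥ v₂) :
    A = B := by
  have hall : ∀ w, A *ᵥ w = B *ᵥ w := by
    intro w
    obtain ⟨a, b, rfl⟩ := decomp hd w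
    rw [Matrix.mulVec_add, Matrix.mulVec_add, Matrix.mulVec_smul, Matrix.mulVec_smul,
      Matrix.mulVec_smul, Matrix.mulVec_smul, hA1, hA2]
  ext i j
  have := congrFun (hall (Pi.single j 1)) i
  simpa using this

lemma l_ne_inv {l : ℝ} (hl : 1 < |l|) : l ≠ l⁻¹ := by
  have hl0 : l ≠ 0 := by intro h; rw [h] at hl; simp at hl; linarith
  intro h
  have h2 : l * l = 1 := by nth_rewrite 2 [h]; exact mul_inv_cancel₀ hl0
  have habs : |l| * |l| = 1 := by rw [← abs_mul, h2]; simp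
  nlinarith

section Part1
variable {Γ Φ Θ : Subgroup SL(2,ℝ)}

lemma inter_ne_bot (hPH : PurelyHyperbolic Γ) (hNE : IsNonElementary Γ)
    (hΦΓ : Φ ≤ Γ) (hΘΓ : Θ ≤ Γ)
    (hΦconj : ∀ g ∈ Γ, ∀ n ∈ Φ, g * n * g⁻¹ ∈ Φ)
    (hΘconj : ∀ g ∈ Γ, ∀ n ∈ Θ, g * n * g⁻¹ ∈ Θ)
    (hΦnt : Φ ≠ ⊥) (hΘnt : Θ ≠ ⊥) : Φ ⊓ Θ ≠ ⊥ := by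
  intro hbot
  apply hNE
  -- all elements of Φ and Θ commute
  have hcomm : ∀ φ ∈ Φ, ∀ θ ∈ Θ, φ * θ = θ * φ := by
    intro φ hφ θ hθ
    have h1 : φ * (θ * φ⁻¹ * θ⁻¹) ∈ Φ := mul_mem hφ (hΦconj θ (hΘΓ hθ) φ⁻¹ (inv_mem hφ))
    have h2 : (φ * θ * φ⁻¹) * θ⁻¹ ∈ Θ := mul_mem (hΘconj φ (hΦΓ hφ) θ hθ) (inv_mem hθ)
    have hmem : φ * θ * φ⁻¹ * θ⁻¹ ∈ Φ ⊓ Θ := ⟨by simpa [mul_assoc] using h1, h2⟩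
    rw [hbot, Subgroup.mem_bot] at hmem
    have h4 : (φ * θ) * (θ * φ)⁻¹ = 1 := by rw [_root_.mul_inv_rev]; simpa [mul_assoc] using hmem
    exact mul_inv_eq_one.1 h4
  -- a nontrivial element of Φ and its eigendata
  obtain ⟨φ0', hφ0ne⟩ := Subgroup.ne_bot_iff_exists_ne_one.1 hΦnt
  set φ0 := (φ0' : SL(2,ℝ)) with hφ0
  have hφ0Φ : φ0 ∈ Φ := φ0'.2
  have hφ01 : φ0 ≠ 1 := fun h => hφ0ne (Subtype.ext h)
  obtain ⟨l, v₁, v₂, hl, h1, h2, hd⟩ := exists_eigenSL (hPH φ0 (hΦΓ hφ0Φ) hφ01)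
  have hlne : l ≠ l⁻¹ := l_ne_inv hl
  -- every element of Θ is diagonal w.r.t. v₁, v₂
  have ΘD : ∀ θ ∈ Θ, ∃ a b : ℝ, a ≠ 0 ∧ b ≠ 0 ∧
      (θ : Matrix (Fin 2) (Fin 2) ℝ) *ᵥ v₁ = a • v₁ ∧
      (θ : Matrix (Fin 2) (Fin 2) ℝ) *ᵥ v₂ = b • v₂ := by
    intro θ hθ
    have hM : (φ0 : Matrix (Fin 2) (Fin 2) ℝ) * (θ : Matrix (Fin 2) (Fin 2) ℝ)
        = (θ : Matrix (Fin 2) (Fin 2) ℝ) * (φ0 : Matrix (Fin 2) (Fin 2) ℝ) := by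
      rw [← Matrix.SpecialLinearGroup.coe_mul, ← Matrix.SpecialLinearGroup.coe_mul,
        hcomm φ0 hφ0Φ θ hθ]
    have key : ∀ (v : Fin 2 → ℝ) (c : ℝ), (φ0 : Matrix (Fin 2) (Fin 2) ℝ) *ᵥ v = c • v →
        (φ0 : Matrix (Fin 2) (Fin 2) ℝ) *ᵥ ((θ : Matrix (Fin 2) (Fin 2) ℝ) *ᵥ v)
          = c • ((θ : Matrix (Fin 2) (Fin 2) ℝ) *ᵥ v) := by
      intro v c hv
      rw [Matrix.mulVec_mulVec, hM, ← Matrix.mulVec_mulVec, hv, Matrix.mulVec_smul]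
    -- θ v₁ is an l-eigenvector hence in span v₁
    have k1 := key v₁ l h1
    have k2 := key v₂ l⁻¹ h2
    have hu1 : (θ : Matrix (Fin 2) (Fin 2) ℝ) *ᵥ v₁ ≠ 0 := mulVec_ne_zero θ (v1_ne_zero hd)
    have hu2 : (θ : Matrix (Fin 2) (Fin 2) ℝ) *ᵥ v₂ ≠ 0 := mulVec_ne_zero θ (v2_ne_zero hd)
    rcases eig_unique hd h1 h2 hlne hu1 k1 with ⟨a, ha, hav⟩ | ⟨b, hb, hbv⟩
    · rcases eig_unique hd h1 h2 hlne hu2 k2 with ⟨a', ha', hav'⟩ | ⟨b', hb', hbv'⟩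
      · -- θ v₂ = a' • v₁ : contradiction with l⁻¹-eigenvalue
        exfalso
        rw [hav'] at k2
        rw [Matrix.mulVec_smul, h1] at k2
        have : (a' * l - l⁻¹ * a') • v₁ + (0:ℝ) • v₂ = 0 := by
          have := sub_eq_zero.2 k2
          rw [← this]; funext i; simp [Pi.smul_apply]; ring
        have hz := (coeff_unique hd this).1
        have : a' * (l - l⁻¹) = 0 := by linear_combination hz
        rcases mul_eq_zero.1 this with h | h
        · exact ha' h
        · exact hlne (by linarith)
      · exact ⟨a, b', ha, hb', hav, hbv'⟩
    · -- θ v₁ = b • v₂ : contradiction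
      exfalso
      rw [hbv] at k1
      rw [Matrix.mulVec_smul, h2] at k1
      have : (0:ℝ) • v₁ + (b * l⁻¹ - l * b) • v₂ = 0 := by
        have := sub_eq_zero.2 k1
        rw [← this]; funext i; simp [Pi.smul_apply]; ring
      have hz := (coeff_unique hd this).2
      have : b * (l⁻¹ - l) = 0 := by linear_combination hz
      rcases mul_eq_zero.1 this with h | h
      · exact hb h
      · exact hlne (by linarith)
  -- nontrivial elements of Θ have distinct eigenvalues on v₁ v₂
  have Θeig : ∀ θ ∈ Θ, θ ≠ 1 → ∃ a b : ℝ, a ≠ 0 ∧ b ≠ 0 ∧ a ≠ b ∧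
      (θ : Matrix (Fin 2) (Fin 2) ℝ) *ᵥ v₁ = a • v₁ ∧
      (θ : Matrix (Fin 2) (Fin 2) ℝ) *ᵥ v₂ = b • v₂ := by
    intro θ hθ hθ1
    obtain ⟨a, b, ha, hb, hv1, hv2⟩ := ΘD θ hθ
    refine ⟨a, b, ha, hb, ?_, hv1, hv2⟩
    intro hab
    subst hab
    have hsm : (θ : Matrix (Fin 2) (Fin 2) ℝ) = a • (1 : Matrix (Fin 2) (Fin 2) ℝ) := by
      apply matrix_ext_basis hd
      · rw [hv1, Matrix.smul_mulVec, Matrix.one_mulVec]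
      · rw [hv2, Matrix.smul_mulVec, Matrix.one_mulVec]
    have hdet : ((θ : Matrix (Fin 2) (Fin 2) ℝ)).det = 1 := θ.2
    rw [hsm, Matrix.det_smul, Matrix.det_one, Fintype.card_fin] at hdet
    have htr : Matrix.trace (θ : Matrix (Fin 2) (Fin 2) ℝ) = 2 * a := by
      rw [hsm, Matrix.trace_smul, Matrix.trace_one]
      simp [Fintype.card_fin]; ring
    have hhyp := hPH θ (hΘΓ hθ) hθ1
    rw [_root_.IsHyperbolic, htr] at hhyp
    have hcases : a = 1 ∨ a = -1 := by
      have h2' : (a-1)*(a+1) = 0 := by linear_combination hdet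
      rcases mul_eq_zero.1 h2' with h | h
      · left; linarith
      · right; linarith
    rcases hcases with h | h <;> rw [h] at hhyp <;> norm_num at hhyp
  -- fix a nontrivial θ0
  obtain ⟨θ0', hθ0ne⟩ := Subgroup.ne_bot_iff_exists_ne_one.1 hΘnt
  set θ0 := (θ0' : SL(2,ℝ)) with hθ0d
  have hθ0Θ : θ0 ∈ Θ := θ0'.2
  have hθ01 : θ0 ≠ 1 := fun h => hθ0ne (Subtype.ext h)
  obtain ⟨μ₁, μ₂, hμ1, hμ2, hμne, hm1, hm2⟩ := Θeig θ0 hθ0Θ hθ01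
  -- dichotomy for elements of Γ
  have dich : ∀ g ∈ Γ,
      (∃ a b : ℝ, a ≠ 0 ∧ b ≠ 0 ∧ (g : Matrix (Fin 2) (Fin 2) ℝ) *ᵥ v₁ = a • v₁ ∧
        (g : Matrix (Fin 2) (Fin 2) ℝ) *ᵥ v₂ = b • v₂) ∨
      (∃ a b : ℝ, a ≠ 0 ∧ b ≠ 0 ∧ (g : Matrix (Fin 2) (Fin 2) ℝ) *ᵥ v₁ = a • v₂ ∧
        (g : Matrix (Fin 2) (Fin 2) ℝ) *ᵥ v₂ = b • v₁) := by
    intro g hg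
    set θg := g * θ0 * g⁻¹ with hθg
    have hθgΘ : θg ∈ Θ := hΘconj g hg θ0 hθ0Θ
    have hθg1 : θg ≠ 1 := by
      intro hone
      apply hθ01
      have := congrArg (fun x => g⁻¹ * x * g) hone
      simpa [mul_assoc, hθg] using this
    obtain ⟨a', b', ha', hb', hab', hA1, hA2⟩ := Θeig θg hθgΘ hθg1
    have hkey : ∀ (v : Fin 2 → ℝ) (c : ℝ), (θ0 : Matrix (Fin 2) (Fin 2) ℝ) *ᵥ v = c • v →
        (θg : Matrix (Fin 2) (Fin 2) ℝ) *ᵥ ((g : Matrix (Fin 2) (Fin 2) ℝ) *ᵥ v)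
          = c • ((g : Matrix (Fin 2) (Fin 2) ℝ) *ᵥ v) := by
      intro v c hv
      have : (θg : Matrix (Fin 2) (Fin 2) ℝ) * (g : Matrix (Fin 2) (Fin 2) ℝ)
          = (g : Matrix (Fin 2) (Fin 2) ℝ) * (θ0 : Matrix (Fin 2) (Fin 2) ℝ) := by
        rw [← Matrix.SpecialLinearGroup.coe_mul, ← Matrix.SpecialLinearGroup.coe_mul, hθg]
        congr 1
        exact inv_mul_cancel_right (g * θ0) g
      rw [Matrix.mulVec_mulVec, this, ← Matrix.mulVec_mulVec, hv, Matrix.mulVec_smul]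
    have hu1 : (g : Matrix (Fin 2) (Fin 2) ℝ) *ᵥ v₁ ≠ 0 := mulVec_ne_zero g (v1_ne_zero hd)
    have hu2 : (g : Matrix (Fin 2) (Fin 2) ℝ) *ᵥ v₂ ≠ 0 := mulVec_ne_zero g (v2_ne_zero hd)
    have e1 := eig_unique hd hA1 hA2 hab' hu1 (hkey v₁ μ₁ hm1)
    have e2 := eig_unique hd hA1 hA2 hab' hu2 (hkey v₂ μ₂ hm2)
    -- rule out same-span cases
    rcases e1 with ⟨a, ha, hva⟩ | ⟨a, ha, hva⟩ <;> rcases e2 with ⟨b, hb, hvb⟩ | ⟨b, hb, hvb⟩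
    · exfalso
      have hzero : (g : Matrix (Fin 2) (Fin 2) ℝ) *ᵥ (b • v₁ + (-a) • v₂) = 0 := by
        rw [Matrix.mulVec_add, Matrix.mulVec_smul, Matrix.mulVec_smul, hva, hvb]
        funext i; simp [Pi.smul_apply]; ring
      have hnz := combo_ne_zero hd (Or.inl hb) (a := b) (b := -a)
      exact (mulVec_ne_zero g hnz) hzero
    · exact Or.inl ⟨a, b, ha, hb, hva, hvb⟩
    · exact Or.inr ⟨a, b, ha, hb, hva, hvb⟩
    · exfalso
      have hzero : (g : Matrix (Fin 2) (Fin 2) ℝ) *ᵥ (b • v₁ + (-a) • v₂) = 0 := by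
        rw [Matrix.mulVec_add, Matrix.mulVec_smul, Matrix.mulVec_smul, hva, hvb]
        funext i; simp [Pi.smul_apply]; ring
      have hnz := combo_ne_zero hd (Or.inl hb) (a := b) (b := -a)
      exact (mulVec_ne_zero g hnz) hzero
  -- define the subgroup H of Γ of "diagonal" elements
  set Dp : SL(2,ℝ) → Prop := fun g => ∃ a b : ℝ, a ≠ 0 ∧ b ≠ 0 ∧
    (g : Matrix (Fin 2) (Fin 2) ℝ) *ᵥ v₁ = a • v₁ ∧
    (g : Matrix (Fin 2) (Fin 2) ℝ) *ᵥ v₂ = b • v₂ with hDp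
  set Sp : SL(2,ℝ) → Prop := fun g => ∃ a b : ℝ, a ≠ 0 ∧ b ≠ 0 ∧
    (g : Matrix (Fin 2) (Fin 2) ℝ) *ᵥ v₁ = a • v₂ ∧
    (g : Matrix (Fin 2) (Fin 2) ℝ) *ᵥ v₂ = b • v₁ with hSp
  have hDS : ∀ g, ¬ (Dp g ∧ Sp g) := by
    rintro g ⟨⟨a, b, ha, hb, hv1, -⟩, ⟨a', b', ha', hb', hv1', -⟩⟩
    rw [hv1'] at hv1
    have hz : (-a) • v₁ + a' • v₂ = 0 := by
      funext i
      have hc := congrFun hv1 i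
      simp [Pi.smul_apply] at hc ⊢
      linarith
    exact ha' (coeff_unique hd hz).2
  have hDmulD : ∀ g h, Dp g → Dp h → Dp (g * h) := by
    rintro g h ⟨a, b, ha, hb, hgv1, hgv2⟩ ⟨a', b', ha', hb', hhv1, hhv2⟩
    refine ⟨a * a', b * b', mul_ne_zero ha ha', mul_ne_zero hb hb', ?_, ?_⟩
    · rw [Matrix.SpecialLinearGroup.coe_mul, ← Matrix.mulVec_mulVec, hhv1,
        Matrix.mulVec_smul, hgv1, smul_smul, mul_comm a' a]
    · rw [Matrix.SpecialLinearGroup.coe_mul, ← Matrix.mulVec_mulVec, hhv2,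
        Matrix.mulVec_smul, hgv2, smul_smul, mul_comm b' b]
  have hDmulS : ∀ g h, Dp g → Sp h → Sp (g * h) := by
    rintro g h ⟨a, b, ha, hb, hgv1, hgv2⟩ ⟨a', b', ha', hb', hhv1, hhv2⟩
    refine ⟨a' * b, b' * a, mul_ne_zero ha' hb, mul_ne_zero hb' ha, ?_, ?_⟩
    · rw [Matrix.SpecialLinearGroup.coe_mul, ← Matrix.mulVec_mulVec, hhv1,
        Matrix.mulVec_smul, hgv2, smul_smul]
    · rw [Matrix.SpecialLinearGroup.coe_mul, ← Matrix.mulVec_mulVec, hhv2,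
        Matrix.mulVec_smul, hgv1, smul_smul]
  have hSmulS : ∀ g h, Sp g → Sp h → Dp (g * h) := by
    rintro g h ⟨a, b, ha, hb, hgv1, hgv2⟩ ⟨a', b', ha', hb', hhv1, hhv2⟩
    refine ⟨a' * b, b' * a, mul_ne_zero ha' hb, mul_ne_zero hb' ha, ?_, ?_⟩
    · rw [Matrix.SpecialLinearGroup.coe_mul, ← Matrix.mulVec_mulVec, hhv1,
        Matrix.mulVec_smul, hgv2, smul_smul]
    · rw [Matrix.SpecialLinearGroup.coe_mul, ← Matrix.mulVec_mulVec, hhv2,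
        Matrix.mulVec_smul, hgv1, smul_smul]
  have hDinv : ∀ g : SL(2,ℝ), Dp g → Dp g⁻¹ := by
    rintro g ⟨a, b, ha, hb, hgv1, hgv2⟩
    exact ⟨a⁻¹, b⁻¹, inv_ne_zero ha, inv_ne_zero hb, inv_eig g hgv1 ha, inv_eig g hgv2 hb⟩
  let H : Subgroup Γ := { carrier := {g : Γ | Dp (g : SL(2,ℝ))}
                          one_mem' := ⟨1, 1, one_ne_zero, one_ne_zero, by
                            simp [Matrix.SpecialLinearGroup.coe_one, Matrix.one_mulVec], by
                            simp [Matrix.SpecialLinearGroup.coe_one, Matrix.one_mulVec]⟩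
                          mul_mem' := fun {x y} hx hy => hDmulD _ _ hx hy
                          inv_mem' := fun {x} hx => hDinv _ hx }
  have hmemH : ∀ g : Γ, g ∈ H ↔ Dp (g : SL(2,ℝ)) := fun g => Iff.rfl
  refine ⟨H, ?_, ?_⟩
  · -- finite index
    by_cases hall : ∀ g : Γ, Dp (g : SL(2,ℝ))
    · have htop : H = ⊤ := by
        rw [Subgroup.eq_top_iff']
        intro g; exact (hmemH g).2 (hall g)
      constructor
      rw [htop, Subgroup.index_top]
      exact one_ne_zero
    · push_neg at hall
      obtain ⟨s, hs⟩ := hall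
      have hSs : Sp (s : SL(2,ℝ)) := by
        rcases dich (s : SL(2,ℝ)) s.2 with h | h
        · exact absurd h hs
        · exact h
      have hidx : H.index = 2 := by
        apply Subgroup.index_eq_two_iff.2
        refine ⟨s, fun b => ?_⟩
        by_cases hb : Dp (b : SL(2,ℝ))
        · right
          refine ⟨hb, ?_⟩
          intro hbs
          have hSbs : Sp ((b * s : Γ) : SL(2,ℝ)) := hDmulS _ _ hb hSs
          exact hDS _ ⟨hbs, hSbs⟩
        · left
          have hSb : Sp (b : SL(2,ℝ)) := by
            rcases dich (b : SL(2,ℝ)) b.2 with h | h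
            · exact absurd h hb
            · exact h
          exact ⟨hSmulS _ _ hSb hSs, hb⟩
      constructor
      rw [hidx]
      exact two_ne_zero
  · -- commutativity
    intro x hx y hy
    obtain ⟨a, b, ha, hb, hx1, hx2⟩ := (hmemH x).1 hx
    obtain ⟨a', b', ha', hb', hy1, hy2⟩ := (hmemH y).1 hy
    apply Subtype.ext
    apply Subtype.ext
    apply matrix_ext_basis hd
    · rw [show (((x * y : Γ) : SL(2,ℝ)) : Matrix (Fin 2) (Fin 2) ℝ)
          = ((x : SL(2,ℝ)) : Matrix (Fin 2) (Fin 2) ℝ) * ((y : SL(2,ℝ)) : Matrix (Fin 2) (Fin 2) ℝ) from rfl,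
        show (((y * x : Γ) : SL(2,ℝ)) : Matrix (Fin 2) (Fin 2) ℝ)
          = ((y : SL(2,ℝ)) : Matrix (Fin 2) (Fin 2) ℝ) * ((x : SL(2,ℝ)) : Matrix (Fin 2) (Fin 2) ℝ) from rfl,
        ← Matrix.mulVec_mulVec, ← Matrix.mulVec_mulVec, hx1, hy1, Matrix.mulVec_smul,
        Matrix.mulVec_smul, hx1, hy1, smul_smul, smul_smul, mul_comm a' a]
    · rw [show (((x * y : Γ) : SL(2,ℝ)) : Matrix (Fin 2) (Fin 2) ℝ)
          = ((x : SL(2,ℝ)) : Matrix (Fin 2) (Fin 2) ℝ) * ((y : SL(2,ℝ)) : Matrix (Fin 2) (Fin 2) ℝ) from rfl,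
        show (((y * x : Γ) : SL(2,ℝ)) : Matrix (Fin 2) (Fin 2) ℝ)
          = ((y : SL(2,ℝ)) : Matrix (Fin 2) (Fin 2) ℝ) * ((x : SL(2,ℝ)) : Matrix (Fin 2) (Fin 2) ℝ) from rfl,
        ← Matrix.mulVec_mulVec, ← Matrix.mulVec_mulVec, hx2, hy2, Matrix.mulVec_smul,
        Matrix.mulVec_smul, hx2, hy2, smul_smul, smul_smul, mul_comm b' b]

end Part1

/-- **Lemma 2.2.** Let `Γ` be a non-elementary discrete purely hyperbolic subgroup of
`SL(2, ℝ)` and let `Φ` and `Θ` be nontrivial normal subgroups of `Γ`. Then `Φ ∩ Θ` is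
nontrivial and `Λ(Φ ∩ Θ) = Λ(Φ) ∩ Λ(Θ)`. -/
theorem normal_subgroups_limitSet_inter
    (Γ : Subgroup SL(2, ℝ)) (hdisc : DiscreteTopology Γ)
    (hPH : PurelyHyperbolic Γ) (hNE : IsNonElementary Γ)
    (Φ Θ : Subgroup SL(2, ℝ)) (hΦΓ : Φ ≤ Γ) (hΘΓ : Θ ≤ Γ)
    (hΦn : (Φ.subgroupOf Γ).Normal) (hΘn : (Θ.subgroupOf Γ).Normal)
    (hΦnt : Φ ≠ ⊥) (hΘnt : Θ ≠ ⊥) :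
    Φ ⊓ Θ ≠ ⊥ ∧ limitSet (Φ ⊓ Θ) = limitSet Φ ∩ limitSet Θ := by

  have coe_conj : ∀ (g n : SL(2,ℝ)) (hg : g ∈ Γ) (hn : n ∈ Γ),
      (((⟨g, hg⟩ * ⟨n, hn⟩ * (⟨g, hg⟩)⁻¹ : Γ) : SL(2,ℝ))) = g * n * g⁻¹ := by
    intro g n hg hn; rfl
  have hconjΦ : ∀ g ∈ Γ, ∀ n ∈ Φ, g * n * g⁻¹ ∈ Φ := by
    intro g hg n hn
    have hmem : (⟨n, hΦΓ hn⟩ : Γ) ∈ Φ.subgroupOf Γ := by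
      rwa [Subgroup.mem_subgroupOf]
    have := hΦn.conj_mem _ hmem ⟨g, hg⟩
    rw [Subgroup.mem_subgroupOf] at this
    rwa [coe_conj] at this
  have hconjΘ : ∀ g ∈ Γ, ∀ n ∈ Θ, g * n * g⁻¹ ∈ Θ := by
    intro g hg n hn
    have hmem : (⟨n, hΘΓ hn⟩ : Γ) ∈ Θ.subgroupOf Γ := by
      rwa [Subgroup.mem_subgroupOf]
    have := hΘn.conj_mem _ hmem ⟨g, hg⟩
    rw [Subgroup.mem_subgroupOf] at this
    rwa [coe_conj] at this
  have hconjI : ∀ g ∈ Γ, ∀ n ∈ Φ ⊓ Θ, g * n * g⁻¹ ∈ Φ ⊓ Θ := by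
    intro g hg n hn
    exact ⟨hconjΦ g hg n hn.1, hconjΘ g hg n hn.2⟩
  have hne := inter_ne_bot hPH hNE hΦΓ hΘΓ hconjΦ hconjΘ hΦnt hΘnt
  refine ⟨hne, ?_⟩
  rw [limitSet_eq_of_normal hPH (inf_le_left.trans hΦΓ) hconjI hne,
    limitSet_eq_of_normal hPH hΦΓ hconjΦ hΦnt,
    limitSet_eq_of_normal hPH hΘΓ hconjΘ hΘnt, Set.inter_self]


end
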